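/- Fix a ∈ ℝ, μ ≥ a and σ > 0, and let the left-truncated Gaussian on [a, ∞) with parameters μ, σ have mean M and density f. Let H = f(a)/f(μ) = e^{−(μ−a)²/(2σ²)} ∈ (0, 1], and set ξ_H = erf(√(ln(1/H))) + 1. Then the variance of the distribution equals (M − a)²·(π·ξ_H² − 2H·ξ_H·√(π·ln(1/H)) − 2H²) / (2·(ξ_H·√(π·ln(1/H)) + H)²). -/

import Mathlib

open MeasureTheory Real Filter Set
open Topology

/-- The error function. -/
noncomputable def erf (x : ℝ) : ℝ :=
  (2 / Real.sqrt Real.pi) * ∫ t in (0:ℝ)..x, Real.exp (-t ^ 2)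

/-- `ξ(r) = erf(r/√2) + 1`. -/
noncomputable def xi (r : ℝ) : ℝ := erf (r / Real.sqrt 2) + 1

/-- Normalizing constant of the left-truncated Gaussian on `[a, ∞)` with parameters `μ, σ`. -/
noncomputable def lZ (a μ σ : ℝ) : ℝ :=
  ∫ x in Set.Ici a, Real.exp (-(x - μ) ^ 2 / (2 * σ ^ 2))

/-- Mean of the left-truncated Gaussian on `[a, ∞)` with parameters `μ, σ`. -/
noncomputable def lMean (a μ σ : ℝ) : ℝ :=
  (∫ x in Set.Ici a, x * Real.exp (-(x - μ) ^ 2 / (2 * σ ^ 2))) / lZ a μ σ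

/-- Variance of the left-truncated Gaussian on `[a, ∞)` with parameters `μ, σ`. -/
noncomputable def lVar (a μ σ : ℝ) : ℝ :=
  (∫ x in Set.Ici a, (x - lMean a μ σ) ^ 2 * Real.exp (-(x - μ) ^ 2 / (2 * σ ^ 2))) / lZ a μ σ

lemma erf_hasDerivAt (x : ℝ) :
    HasDerivAt erf (2 / Real.sqrt Real.pi * Real.exp (-x ^ 2)) x := by
  have hcont : Continuous fun t : ℝ => Real.exp (-t ^ 2) := by continuity
  have h : HasDerivAt (fun y : ℝ => ∫ t in (0:ℝ)..y, Real.exp (-t ^ 2))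
      (Real.exp (-x ^ 2)) x := (hcont.integral_hasStrictDerivAt 0 x).hasDerivAt
  exact h.const_mul (2 / Real.sqrt Real.pi)

lemma tendsto_erf_atTop : Tendsto erf atTop (𝓝 1) := by
  have hint : IntegrableOn (fun t : ℝ => Real.exp (-t ^ 2)) (Ioi 0) := by
    have := (integrable_exp_neg_mul_sq one_pos).integrableOn (s := Ioi 0)
    simpa using this
  have h := intervalIntegral_tendsto_integral_Ioi 0 hint tendsto_id
  have h2 : Tendsto erf atTop
      (𝓝 (2 / Real.sqrt Real.pi * ∫ t in Ioi (0:ℝ), Real.exp (-t ^ 2))) := by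
    unfold erf
    exact h.const_mul _
  have h3 : (∫ t in Ioi (0:ℝ), Real.exp (-t ^ 2)) = Real.sqrt Real.pi / 2 := by
    have := integral_gaussian_Ioi 1
    simpa using this
  rw [h3] at h2
  have h4 : 2 / Real.sqrt Real.pi * (Real.sqrt Real.pi / 2) = 1 := by
    have : Real.sqrt Real.pi ≠ 0 := by positivity
    field_simp
  rwa [h4] at h2

lemma erf_neg (x : ℝ) : erf (-x) = - erf x := by
  unfold erf
  rw [← mul_neg]
  congr 1
  have h1 : ∫ t in (0:ℝ)..(-x), Real.exp (-t ^ 2)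
      = ∫ t in (0:ℝ)..(-x), Real.exp (-(-t) ^ 2) := by simp
  rw [h1, intervalIntegral.integral_comp_neg fun t => Real.exp (-t ^ 2)]
  simp only [neg_neg, neg_zero]
  exact intervalIntegral.integral_symm 0 x

lemma erf_nonneg {x : ℝ} (hx : 0 ≤ x) : 0 ≤ erf x := by
  unfold erf
  apply mul_nonneg (by positivity)
  apply intervalIntegral.integral_nonneg hx
  intro t _
  positivity

lemma integrable_g {σ : ℝ} (hσ : 0 < σ) (μ : ℝ) :
    Integrable fun x : ℝ => Real.exp (-(x - μ) ^ 2 / (2 * σ ^ 2)) := by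
  have hb : (0:ℝ) < 1 / (2 * σ ^ 2) := by positivity
  refine ((integrable_exp_neg_mul_sq hb).comp_sub_right μ).congr
    (Eventually.of_forall fun x => ?_)
  exact congrArg Real.exp (by ring)

lemma integrable_xg {σ : ℝ} (hσ : 0 < σ) (μ : ℝ) :
    Integrable fun x : ℝ => (x - μ) * Real.exp (-(x - μ) ^ 2 / (2 * σ ^ 2)) := by
  have hb : (0:ℝ) < 1 / (2 * σ ^ 2) := by positivity
  refine ((integrable_mul_exp_neg_mul_sq hb).comp_sub_right μ).congr
    (Eventually.of_forall fun x => ?_)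
  exact congrArg (fun t => (x - μ) * Real.exp t) (by ring)

lemma integrable_x2g {σ : ℝ} (hσ : 0 < σ) (μ : ℝ) :
    Integrable fun x : ℝ => (x - μ) ^ 2 * Real.exp (-(x - μ) ^ 2 / (2 * σ ^ 2)) := by
  have hb : (0:ℝ) < 1 / (2 * σ ^ 2) := by positivity
  have h := integrable_rpow_mul_exp_neg_mul_sq hb (s := 2) (by norm_num)
  have heq : (fun x : ℝ => x ^ (2:ℝ) * Real.exp (-(1 / (2 * σ ^ 2)) * x ^ 2))
      = fun x : ℝ => x ^ (2:ℕ) * Real.exp (-(1 / (2 * σ ^ 2)) * x ^ 2) := by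
    funext x
    rw [Real.rpow_two]
  rw [heq] at h
  refine (h.comp_sub_right μ).congr (Eventually.of_forall fun x => ?_)
  exact congrArg (fun t => (x - μ) ^ 2 * Real.exp t) (by ring)

lemma tendsto_gauss_atTop {σ : ℝ} (hσ : 0 < σ) (μ : ℝ) :
    Tendsto (fun x : ℝ => Real.exp (-(x - μ) ^ 2 / (2 * σ ^ 2))) atTop (𝓝 0) := by
  have hlin : Tendsto (fun x : ℝ => x - μ) atTop atTop := by
    simpa [sub_eq_add_neg] using tendsto_atTop_add_const_right atTop (-μ) tendsto_id
  have h1 : Tendsto (fun x : ℝ => (x - μ) ^ 2 / (2 * σ ^ 2)) atTop atTop :=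
    Tendsto.atTop_div_const (by positivity) ((tendsto_pow_atTop two_ne_zero).comp hlin)
  have h2 := Real.tendsto_exp_neg_atTop_nhds_zero.comp h1
  refine h2.congr fun x => ?_
  simp [Function.comp, neg_div]

lemma tendsto_mul_gauss_atTop {σ : ℝ} (hσ : 0 < σ) (μ : ℝ) :
    Tendsto (fun x : ℝ => (x - μ) * Real.exp (-(x - μ) ^ 2 / (2 * σ ^ 2))) atTop (𝓝 0) := by
  have hb : (0:ℝ) < 1 / (2 * σ ^ 2) := by positivity
  have hhalf : Tendsto (fun x : ℝ => Real.exp (-(1/2) * x)) atTop (𝓝 0) := by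
    have := Real.tendsto_exp_neg_atTop_nhds_zero.comp
      (Tendsto.const_mul_atTop one_half_pos tendsto_id)
    refine this.congr fun x => ?_
    simp [Function.comp, neg_mul]
  have h0 : Tendsto (fun y : ℝ => y * Real.exp (-(1 / (2 * σ ^ 2)) * y ^ 2)) atTop (𝓝 0) := by
    have h := (rpow_mul_exp_neg_mul_sq_isLittleO_exp_neg hb 1).isBigO.trans_tendsto hhalf
    refine h.congr fun x => ?_
    rw [Real.rpow_one]
  have hlin : Tendsto (fun x : ℝ => x - μ) atTop atTop := by
    simpa [sub_eq_add_neg] using tendsto_atTop_add_const_right atTop (-μ) tendsto_id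
  have h1 := h0.comp hlin
  refine h1.congr fun x => ?_
  simp only [Function.comp]
  exact congrArg (fun t => (x - μ) * Real.exp t) (by ring)


lemma hasDerivAt_gauss {σ : ℝ} (hσ : 0 < σ) (μ x : ℝ) :
    HasDerivAt (fun x : ℝ => Real.exp (-(x - μ) ^ 2 / (2 * σ ^ 2)))
      (Real.exp (-(x - μ) ^ 2 / (2 * σ ^ 2)) * (-(x - μ) / σ ^ 2)) x := by
  have h2 : HasDerivAt (fun x : ℝ => (x - μ) ^ 2) (2 * (x - μ)) x := by
    exact (((hasDerivAt_id x).sub_const μ).pow 2).congr_deriv (by norm_num)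
  have h1 : HasDerivAt (fun x : ℝ => -(x - μ) ^ 2 / (2 * σ ^ 2)) (-(x - μ) / σ ^ 2) x := by
    have := h2.neg.div_const (2 * σ ^ 2)
    refine this.congr_deriv ?_
    field_simp
  exact h1.exp

lemma integral_gauss_sub (a μ : ℝ) {σ : ℝ} (hσ : 0 < σ) :
    ∫ x in Ici a, (x - μ) * Real.exp (-(x - μ) ^ 2 / (2 * σ ^ 2))
      = σ ^ 2 * Real.exp (-(a - μ) ^ 2 / (2 * σ ^ 2)) := by
  rw [integral_Ici_eq_integral_Ioi]
  have hderiv : ∀ x ∈ Ici a,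
      HasDerivAt (fun x => -σ ^ 2 * Real.exp (-(x - μ) ^ 2 / (2 * σ ^ 2)))
        ((x - μ) * Real.exp (-(x - μ) ^ 2 / (2 * σ ^ 2))) x := by
    intro x _
    have h3 := (hasDerivAt_gauss hσ μ x).const_mul (-σ ^ 2)
    refine h3.congr_deriv ?_
    field_simp
  have hint : IntegrableOn (fun x => (x - μ) * Real.exp (-(x - μ) ^ 2 / (2 * σ ^ 2))) (Ioi a) :=
    (integrable_xg hσ μ).integrableOn
  have htend : Tendsto (fun x => -σ ^ 2 * Real.exp (-(x - μ) ^ 2 / (2 * σ ^ 2)))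
      atTop (𝓝 0) := by
    have := (tendsto_gauss_atTop hσ μ).const_mul (-σ ^ 2)
    simpa using this
  rw [integral_Ioi_of_hasDerivAt_of_tendsto' hderiv hint htend]
  ring

lemma integral_gauss (a μ : ℝ) {σ : ℝ} (hσ : 0 < σ) :
    ∫ x in Ici a, Real.exp (-(x - μ) ^ 2 / (2 * σ ^ 2))
      = σ * Real.sqrt 2 * (Real.sqrt Real.pi / 2)
          * (erf ((μ - a) / (σ * Real.sqrt 2)) + 1) := by
  rw [integral_Ici_eq_integral_Ioi]
  have hc0 : (0:ℝ) < σ * Real.sqrt 2 := by positivity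
  have hπ : (0:ℝ) < Real.sqrt Real.pi := Real.sqrt_pos.2 Real.pi_pos
  have hderiv : ∀ x ∈ Ici a,
      HasDerivAt (fun x => σ * Real.sqrt 2 * (Real.sqrt Real.pi / 2)
          * erf ((x - μ) / (σ * Real.sqrt 2)))
        (Real.exp (-(x - μ) ^ 2 / (2 * σ ^ 2))) x := by
    intro x _
    have h1 : HasDerivAt (fun x : ℝ => (x - μ) / (σ * Real.sqrt 2)) (1 / (σ * Real.sqrt 2)) x := by
      simpa using ((hasDerivAt_id x).sub_const μ).div_const (σ * Real.sqrt 2)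
    have h2 := ((erf_hasDerivAt ((x - μ) / (σ * Real.sqrt 2))).comp x h1).const_mul
      (σ * Real.sqrt 2 * (Real.sqrt Real.pi / 2))
    refine h2.congr_deriv ?_
    have hexp : -(x - μ) ^ 2 / (2 * σ ^ 2) = -((x - μ) / (σ * Real.sqrt 2)) ^ 2 := by
      rw [div_pow, mul_pow, Real.sq_sqrt (by norm_num : (0:ℝ) ≤ 2)]
      ring
    rw [hexp]
    have h2' : Real.sqrt 2 ≠ 0 := by positivity
    field_simp
  have hint : IntegrableOn (fun x => Real.exp (-(x - μ) ^ 2 / (2 * σ ^ 2))) (Ioi a) :=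
    (integrable_g hσ μ).integrableOn
  have hlin : Tendsto (fun x : ℝ => (x - μ) / (σ * Real.sqrt 2)) atTop atTop := by
    apply Tendsto.atTop_div_const hc0
    simpa [sub_eq_add_neg] using tendsto_atTop_add_const_right atTop (-μ) tendsto_id
  have htend : Tendsto (fun x => σ * Real.sqrt 2 * (Real.sqrt Real.pi / 2)
        * erf ((x - μ) / (σ * Real.sqrt 2))) atTop
      (𝓝 (σ * Real.sqrt 2 * (Real.sqrt Real.pi / 2) * 1)) :=
    (tendsto_erf_atTop.comp hlin).const_mul _
  rw [integral_Ioi_of_hasDerivAt_of_tendsto' hderiv hint htend]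
  rw [show (a - μ) / (σ * Real.sqrt 2) = -((μ - a) / (σ * Real.sqrt 2)) by ring, erf_neg]
  ring

lemma integral_gauss_sq (a μ : ℝ) {σ : ℝ} (hσ : 0 < σ) :
    ∫ x in Ici a, (x - μ) ^ 2 * Real.exp (-(x - μ) ^ 2 / (2 * σ ^ 2))
      = σ ^ 2 * (∫ x in Ici a, Real.exp (-(x - μ) ^ 2 / (2 * σ ^ 2)))
        + σ ^ 2 * (a - μ) * Real.exp (-(a - μ) ^ 2 / (2 * σ ^ 2)) := by
  have key : ∫ x in Ici a, ((x - μ) ^ 2 * Real.exp (-(x - μ) ^ 2 / (2 * σ ^ 2))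
        - σ ^ 2 * Real.exp (-(x - μ) ^ 2 / (2 * σ ^ 2)))
      = σ ^ 2 * (a - μ) * Real.exp (-(a - μ) ^ 2 / (2 * σ ^ 2)) := by
    rw [integral_Ici_eq_integral_Ioi]
    have hderiv : ∀ x ∈ Ici a,
        HasDerivAt (fun x => -σ ^ 2 * ((x - μ) * Real.exp (-(x - μ) ^ 2 / (2 * σ ^ 2))))
          ((x - μ) ^ 2 * Real.exp (-(x - μ) ^ 2 / (2 * σ ^ 2))
            - σ ^ 2 * Real.exp (-(x - μ) ^ 2 / (2 * σ ^ 2))) x := by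
      intro x _
      have hid : HasDerivAt (fun x : ℝ => x - μ) 1 x := (hasDerivAt_id x).sub_const μ
      have hmul := (hid.mul (hasDerivAt_gauss hσ μ x)).const_mul (-σ ^ 2)
      refine hmul.congr_deriv ?_
      field_simp
      ring
    have hint : IntegrableOn (fun x => (x - μ) ^ 2 * Real.exp (-(x - μ) ^ 2 / (2 * σ ^ 2))
        - σ ^ 2 * Real.exp (-(x - μ) ^ 2 / (2 * σ ^ 2))) (Ioi a) :=
      ((integrable_x2g hσ μ).sub ((integrable_g hσ μ).const_mul (σ ^ 2))).integrableOn
    have htend : Tendsto (fun x => -σ ^ 2 * ((x - μ) * Real.exp (-(x - μ) ^ 2 / (2 * σ ^ 2))))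
        atTop (𝓝 0) := by
      have := (tendsto_mul_gauss_atTop hσ μ).const_mul (-σ ^ 2)
      simpa using this
    rw [integral_Ioi_of_hasDerivAt_of_tendsto' hderiv hint htend]
    ring
  rw [integral_sub ((integrable_x2g hσ μ).integrableOn)
    (((integrable_g hσ μ).const_mul (σ ^ 2)).integrableOn),
    integral_const_mul] at key
  linarith


/-- the variance of a left-truncated Gaussian (with `μ ≥ a`) in terms of the
relative height `H = f(a)/f(μ) = e^{−(μ−a)²/(2σ²)}` at the boundary. -/
theorem lVar_eq_of_height (a μ σ : ℝ) (hσ : 0 < σ) (hμ : a ≤ μ)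
    (H ξH : ℝ) (hH : H = Real.exp (-(μ - a) ^ 2 / (2 * σ ^ 2)))
    (hξ : ξH = erf (Real.sqrt (Real.log (1 / H))) + 1) :
    H ∈ Set.Ioc (0 : ℝ) 1 ∧
      lVar a μ σ =
        (lMean a μ σ - a) ^ 2 *
            (Real.pi * ξH ^ 2 - 2 * H * ξH * Real.sqrt (Real.pi * Real.log (1 / H)) -
              2 * H ^ 2) /
          (2 * (ξH * Real.sqrt (Real.pi * Real.log (1 / H)) + H) ^ 2) := by
  have hH0 : 0 < H := hH ▸ Real.exp_pos _
  have hH1 : H ≤ 1 := by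
    rw [hH, Real.exp_le_one_iff, neg_div]
    exact neg_nonpos.2 (by positivity)
  refine ⟨⟨hH0, hH1⟩, ?_⟩
  set s : ℝ := Real.sqrt (Real.pi / 2) with hs_def
  have hs : s ^ 2 = Real.pi / 2 := Real.sq_sqrt (by positivity)
  have hs0 : 0 < s := Real.sqrt_pos.2 (by positivity)
  have hμa : (0:ℝ) ≤ μ - a := by linarith
  have h2 : (0:ℝ) ≤ 2 := by norm_num
  have hlog : Real.log (1 / H) = (μ - a) ^ 2 / (2 * σ ^ 2) := by
    rw [hH, one_div, ← Real.exp_neg, Real.log_exp]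
    ring
  have hsqlog : Real.sqrt (Real.log (1 / H)) = (μ - a) / (σ * Real.sqrt 2) := by
    rw [hlog, show (μ - a) ^ 2 / (2 * σ ^ 2) = ((μ - a) / (σ * Real.sqrt 2)) ^ 2 by
      rw [div_pow, mul_pow, Real.sq_sqrt h2]; ring]
    exact Real.sqrt_sq (by positivity)
  have hp : Real.sqrt (Real.pi * Real.log (1 / H)) = (μ - a) / σ * s := by
    rw [hlog, show Real.pi * ((μ - a) ^ 2 / (2 * σ ^ 2)) = ((μ - a) / σ * s) ^ 2 by
      rw [mul_pow, div_pow, hs]; ring]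
    exact Real.sqrt_sq (mul_nonneg (by positivity) hs0.le)
  have hxi : ξH = erf ((μ - a) / (σ * Real.sqrt 2)) + 1 := by rw [hξ, hsqlog]
  have herf0 : 0 ≤ erf ((μ - a) / (σ * Real.sqrt 2)) := erf_nonneg (by positivity)
  have hξ1 : 1 ≤ ξH := by rw [hxi]; linarith
  have hξ0 : 0 < ξH := by linarith
  have hconst : Real.sqrt 2 * (Real.sqrt Real.pi / 2) = s := by
    rw [hs_def]
    rw [show Real.pi / 2 = (Real.sqrt 2 * (Real.sqrt Real.pi / 2)) ^ 2 by
      rw [mul_pow, div_pow, Real.sq_sqrt h2, Real.sq_sqrt Real.pi_pos.le]; ring]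
    exact (Real.sqrt_sq (by positivity)).symm
  have hga : Real.exp (-(a - μ) ^ 2 / (2 * σ ^ 2)) = H := by
    rw [hH, show -(μ - a) ^ 2 = -(a - μ) ^ 2 by ring]
  have hZ : lZ a μ σ = σ * s * ξH := by
    rw [lZ, integral_gauss a μ hσ, mul_assoc σ, hconst, ← hxi]
  have hZ0 : lZ a μ σ ≠ 0 := by rw [hZ]; positivity
  have hM : lMean a μ σ = μ + σ ^ 2 * H / (σ * s * ξH) := by
    rw [lMean]
    have hsplit : (fun x : ℝ => x * Real.exp (-(x - μ) ^ 2 / (2 * σ ^ 2)))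
        = fun x : ℝ => (x - μ) * Real.exp (-(x - μ) ^ 2 / (2 * σ ^ 2))
            + μ * Real.exp (-(x - μ) ^ 2 / (2 * σ ^ 2)) := by
      funext x; ring
    rw [hsplit, integral_add ((integrable_xg hσ μ).integrableOn)
        (((integrable_g hσ μ).const_mul μ).integrableOn),
      integral_const_mul, integral_gauss_sub a μ hσ, hga, ← lZ, hZ]
    have : σ * s * ξH ≠ 0 := by positivity
    field_simp
    ring
  have hVint : ∫ x in Ici a, (x - lMean a μ σ) ^ 2 * Real.exp (-(x - μ) ^ 2 / (2 * σ ^ 2))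
      = (σ ^ 2 * lZ a μ σ + σ ^ 2 * (a - μ) * H)
        + 2 * (μ - lMean a μ σ) * (σ ^ 2 * H) + (μ - lMean a μ σ) ^ 2 * lZ a μ σ := by
    have hsplit : (fun x : ℝ => (x - lMean a μ σ) ^ 2 * Real.exp (-(x - μ) ^ 2 / (2 * σ ^ 2)))
        = fun x : ℝ => ((x - μ) ^ 2 * Real.exp (-(x - μ) ^ 2 / (2 * σ ^ 2))
            + (2 * (μ - lMean a μ σ)) * ((x - μ) * Real.exp (-(x - μ) ^ 2 / (2 * σ ^ 2))))
            + (μ - lMean a μ σ) ^ 2 * Real.exp (-(x - μ) ^ 2 / (2 * σ ^ 2)) := by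
      funext x; ring
    have hAB : Integrable (fun x : ℝ => (x - μ) ^ 2 * Real.exp (-(x - μ) ^ 2 / (2 * σ ^ 2))
        + (2 * (μ - lMean a μ σ)) * ((x - μ) * Real.exp (-(x - μ) ^ 2 / (2 * σ ^ 2)))) :=
      (integrable_x2g hσ μ).add ((integrable_xg hσ μ).const_mul _)
    rw [hsplit, integral_add hAB.integrableOn
        (((integrable_g hσ μ).const_mul _).integrableOn),
      integral_add ((integrable_x2g hσ μ).integrableOn)
        (((integrable_xg hσ μ).const_mul _).integrableOn),
      integral_const_mul, integral_const_mul, integral_gauss_sq a μ hσ,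
      integral_gauss_sub a μ hσ, hga, ← lZ]
  have hπeq : Real.pi = 2 * s ^ 2 := by rw [hs]; ring
  have hdenpos : (0:ℝ) < ξH * ((μ - a) / σ * s) + H :=
    add_pos_of_nonneg_of_pos (mul_nonneg hξ0.le (mul_nonneg (by positivity) hs0.le)) hH0
  rw [lVar, hVint, hZ, hM, hp, hπeq]
  have hne : ξH * ((μ - a) / σ * s) + H ≠ 0 := ne_of_gt hdenpos
  field_simp
  ring
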